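/- The unique solution {a_t*} of the negative discount dynamic program satisfies the Euler equation ℓ'(a*_{t+1}) = max { β^{-1} ℓ'(a*_t), ℓ'(0) } for all t ≥ 0; in particular the sequence {a_t*} is monotone decreasing. -/

import Mathlib

open Set Filter ENNReal Topology

/-- Total discounted loss `∑_{t=0}^∞ β^t ℓ(a_t)` of an action sequence, valued in `ℝ≥0∞`
(divergent sums are `∞`; the losses `ℓ(a_t)` are nonnegative for feasible sequences). -/
noncomputable def totalLoss (β : ℝ) (ℓ : ℝ → ℝ) (a : ℕ → ℝ) : ℝ≥0∞ :=
  ∑' t, ENNReal.ofReal (β ^ t * ℓ (a t))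

/-- A sequence is feasible for remaining stock `x` if it is nonnegative and sums to `x`. -/
def Feasible (x : ℝ) (a : ℕ → ℝ) : Prop :=
  (∀ t, 0 ≤ a t) ∧ HasSum a x

set_option maxHeartbeats 1000000 in
/-- the unique solution `{a_t*}` of the negative discount dynamic program
satisfies the Euler equation `ℓ'(a*_{t+1}) = max { β⁻¹ ℓ'(a*_t), ℓ'(0) }` for all `t ≥ 0`;
in particular `{a_t*}` is monotone decreasing. -/
theorem euler_equation_of_optimal_sequence
    (xhat : ℝ) (hxhat : 0 < xhat)
    (ℓ ℓd : ℝ → ℝ)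
    (hderiv : ∀ x ∈ Set.Icc 0 xhat, HasDerivAt ℓ (ℓd x) x)
    (hcont_deriv : ContinuousOn ℓd (Set.Icc 0 xhat))
    (hconv : StrictConvexOn ℝ (Set.Icc 0 xhat) ℓ)
    (hzero : ℓ 0 = 0)
    (hpos : ∀ x ∈ Set.Icc 0 xhat, 0 < ℓd x)
    (β : ℝ) (hβ : 1 < β)
    (astar : ℕ → ℝ)
    (hfeas : Feasible xhat astar)
    (hmin : ∀ a : ℕ → ℝ, Feasible xhat a → totalLoss β ℓ astar ≤ totalLoss β ℓ a) :
    (∀ t : ℕ, ℓd (astar (t + 1)) = max (β⁻¹ * ℓd (astar t)) (ℓd 0)) ∧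
    Antitone astar := by
  classical
  obtain ⟨hnn, hsum⟩ := hfeas
  have hβ0 : (0 : ℝ) < β := lt_trans one_pos hβ
  have h0S : (0 : ℝ) ∈ Set.Icc (0 : ℝ) xhat := ⟨le_refl 0, hxhat.le⟩
  have hmem : ∀ t, astar t ∈ Set.Icc (0 : ℝ) xhat := fun t =>
    ⟨hnn t, le_hasSum hsum t fun i _ => hnn i⟩
  have hpair : ∀ t, astar t + astar (t + 1) ≤ xhat := by
    intro t
    have h := sum_le_hasSum ({t, t + 1} : Finset ℕ) (fun i _ => hnn i) hsum
    rwa [Finset.sum_pair (Nat.lt_succ_self t).ne] at h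
  -- slope bounds from convexity
  have hgrad : ∀ x ∈ Set.Icc (0 : ℝ) xhat, ∀ y ∈ Set.Icc (0 : ℝ) xhat, x < y →
      (y - x) * ℓd x ≤ ℓ y - ℓ x ∧ ℓ y - ℓ x ≤ (y - x) * ℓd y := by
    intro x hx y hy hxy
    have h1 := hconv.lt_slope_of_hasDerivAt hx hy hxy (hderiv x hx)
    have h2 := hconv.slope_lt_of_hasDerivAt hx hy hxy (hderiv y hy)
    rw [slope_def_field] at h1 h2
    have hd : (0 : ℝ) < y - x := sub_pos.mpr hxy
    constructor
    · have := (lt_div_iff₀ hd).mp h1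
      linarith
    · have := (div_lt_iff₀ hd).mp h2
      linarith
  have hmono : StrictMonoOn ℓd (Set.Icc (0 : ℝ) xhat) := by
    intro a ha b hb hab
    exact (hconv.lt_slope_of_hasDerivAt ha hb hab (hderiv a ha)).trans
      (hconv.slope_lt_of_hasDerivAt ha hb hab (hderiv b hb))
  have hℓnn : ∀ x ∈ Set.Icc (0 : ℝ) xhat, 0 ≤ ℓ x := by
    intro x hx
    rcases eq_or_lt_of_le hx.1 with h | h
    · rw [← h, hzero]
    · have hg := (hgrad 0 h0S x hx h).1
      have hp0 := hpos 0 h0S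
      nlinarith
  -- the total loss of the optimum is finite
  have hne_top : totalLoss β ℓ astar ≠ ⊤ := by
    have hbfeas : Feasible xhat (fun n => if n = 0 then xhat else 0) := by
      refine ⟨fun n => ?_, hasSum_ite_eq 0 xhat⟩
      by_cases h : n = 0 <;> simp [h, hxhat.le]
    refine ne_top_of_le_ne_top ?_ (hmin _ hbfeas)
    rw [totalLoss, tsum_eq_single 0 ?_]
    · exact ENNReal.ofReal_ne_top
    · intro n hn
      simp [hn, hzero]
  -- perturbation inequality
  have hkey : ∀ (t : ℕ) (c d : ℝ), c ∈ Set.Icc (0 : ℝ) xhat → d ∈ Set.Icc (0 : ℝ) xhat →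
      c + d = astar t + astar (t + 1) →
      β ^ t * ℓ (astar t) + β ^ (t + 1) * ℓ (astar (t + 1)) ≤
        β ^ t * ℓ c + β ^ (t + 1) * ℓ d := by
    intro t c d hc hd hcd
    have hne : t ≠ t + 1 := (Nat.lt_succ_self t).ne
    set a' : ℕ → ℝ := Function.update (Function.update astar t c) (t + 1) d with ha'
    have ha't : a' t = c := by
      rw [ha', Function.update_of_ne hne, Function.update_self]
    have ha't1 : a' (t + 1) = d := by rw [ha', Function.update_self]
    have ha'o : ∀ n, n ≠ t → n ≠ t + 1 → a' n = astar n := by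
      intro n h1 h2
      rw [ha', Function.update_of_ne h2, Function.update_of_ne h1]
    have hfeas' : Feasible xhat a' := by
      constructor
      · intro n
        rcases eq_or_ne n (t + 1) with rfl | h2
        · rw [ha't1]; exact hd.1
        rcases eq_or_ne n t with rfl | h1
        · rw [ha't]; exact hc.1
        · rw [ha'o n h1 h2]; exact hnn n
      · have h1 := hsum.update t c
        have h2 := h1.update (t + 1) d
        have e : (Function.update astar t c) (t + 1) = astar (t + 1) :=
          Function.update_of_ne (Ne.symm hne) _ _
        rw [e] at h2
        have : d - astar (t + 1) + (c - astar t + xhat) = xhat := by linarith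
        rwa [this] at h2
    have hle := hmin a' hfeas'
    have hexpand : ∀ b : ℕ → ℝ, totalLoss β ℓ b =
        ENNReal.ofReal (β ^ t * ℓ (b t)) + ENNReal.ofReal (β ^ (t + 1) * ℓ (b (t + 1))) +
          ∑' n, ite (n = t + 1) 0 (ite (n = t) 0 (ENNReal.ofReal (β ^ n * ℓ (b n)))) := by
      intro b
      rw [totalLoss, Summable.tsum_eq_add_tsum_ite' t ENNReal.summable,
        Summable.tsum_eq_add_tsum_ite'
        (f := fun x => if x = t then (0 : ℝ≥0∞) else ENNReal.ofReal (β ^ x * ℓ (b x)))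
        (t + 1) ENNReal.summable]
      have e1 : (if t + 1 = t then (0 : ℝ≥0∞) else ENNReal.ofReal (β ^ (t + 1) * ℓ (b (t + 1))))
          = ENNReal.ofReal (β ^ (t + 1) * ℓ (b (t + 1))) := by
        rw [if_neg (Nat.succ_ne_self t)]
      rw [e1, ← add_assoc]
    have htail_eq : (∑' n, ite (n = t + 1) 0 (ite (n = t) 0 (ENNReal.ofReal (β ^ n * ℓ (a' n)))))
        = ∑' n, ite (n = t + 1) 0 (ite (n = t) 0 (ENNReal.ofReal (β ^ n * ℓ (astar n)))) := by
      apply tsum_congr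
      intro n
      rcases eq_or_ne n (t + 1) with rfl | h2
      · simp
      rcases eq_or_ne n t with rfl | h1
      · simp [h2]
      · rw [if_neg h2, if_neg h1, if_neg h2, if_neg h1, ha'o n h1 h2]
    set T : ℝ≥0∞ := ∑' n, ite (n = t + 1) 0 (ite (n = t) 0 (ENNReal.ofReal (β ^ n * ℓ (astar n))))
      with hTdef
    have hT : T ≠ ⊤ := by
      intro hcon
      apply hne_top
      rw [hexpand astar, ← hTdef, hcon, add_top]
    have hp : ENNReal.ofReal (β ^ t * ℓ (astar t)) + ENNReal.ofReal (β ^ (t + 1) * ℓ (astar (t + 1)))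
        ≤ ENNReal.ofReal (β ^ t * ℓ (a' t)) + ENNReal.ofReal (β ^ (t + 1) * ℓ (a' (t + 1))) := by
      have h1 := hle
      rw [hexpand astar, hexpand a', htail_eq, ← hTdef] at h1
      exact (ENNReal.add_le_add_iff_right hT).mp h1
    rw [ha't, ha't1] at hp
    have hn1 : 0 ≤ β ^ t * ℓ (astar t) := mul_nonneg (pow_pos hβ0 t).le (hℓnn _ (hmem t))
    have hn2 : 0 ≤ β ^ (t + 1) * ℓ (astar (t + 1)) :=
      mul_nonneg (pow_pos hβ0 _).le (hℓnn _ (hmem (t + 1)))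
    have hn3 : 0 ≤ β ^ t * ℓ c := mul_nonneg (pow_pos hβ0 t).le (hℓnn _ hc)
    have hn4 : 0 ≤ β ^ (t + 1) * ℓ d := mul_nonneg (pow_pos hβ0 _).le (hℓnn _ hd)
    rw [← ENNReal.ofReal_add hn1 hn2, ← ENNReal.ofReal_add hn3 hn4,
      ENNReal.ofReal_le_ofReal_iff (by linarith)] at hp
    exact hp
  -- continuity helpers
  have htplus : ∀ x ∈ Set.Icc (0 : ℝ) xhat, x < xhat →
      Tendsto (fun ε : ℝ => ℓd (x + ε)) (𝓝[>] (0 : ℝ)) (𝓝 (ℓd x)) := by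
    intro x hx hlt
    have hc : ContinuousWithinAt ℓd (Set.Icc 0 xhat) x := hcont_deriv x hx
    apply hc.tendsto.comp
    apply tendsto_nhdsWithin_of_tendsto_nhds_of_eventually_within
    · have h1 : Tendsto (fun ε : ℝ => x + ε) (𝓝 (0 : ℝ)) (𝓝 (x + 0)) :=
        tendsto_const_nhds.add tendsto_id
      simpa using h1.mono_left nhdsWithin_le_nhds
    · filter_upwards [Ioc_mem_nhdsGT_of_mem (⟨le_refl (0 : ℝ), sub_pos.mpr hlt⟩ :
        (0 : ℝ) ∈ Set.Ico (0 : ℝ) (xhat - x))] with ε hε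
      exact ⟨by linarith [hx.1, hε.1.le], by linarith [hε.2]⟩
  have htminus : ∀ x ∈ Set.Icc (0 : ℝ) xhat, 0 < x →
      Tendsto (fun ε : ℝ => ℓd (x - ε)) (𝓝[>] (0 : ℝ)) (𝓝 (ℓd x)) := by
    intro x hx hlt
    have hc : ContinuousWithinAt ℓd (Set.Icc 0 xhat) x := hcont_deriv x hx
    apply hc.tendsto.comp
    apply tendsto_nhdsWithin_of_tendsto_nhds_of_eventually_within
    · have h1 : Tendsto (fun ε : ℝ => x - ε) (𝓝 (0 : ℝ)) (𝓝 (x - 0)) :=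
        tendsto_const_nhds.sub tendsto_id
      simpa using h1.mono_left nhdsWithin_le_nhds
    · filter_upwards [Ioc_mem_nhdsGT_of_mem (⟨le_refl (0 : ℝ), hlt⟩ :
        (0 : ℝ) ∈ Set.Ico (0 : ℝ) x)] with ε hε
      exact ⟨by linarith [hε.2], by linarith [hx.2, hε.1.le]⟩
  -- Euler inequality A : shifting mass from t+1 to t
  have hA : ∀ t, 0 < astar (t + 1) → β * ℓd (astar (t + 1)) ≤ ℓd (astar t) := by
    intro t hy
    have hxS := hmem t
    have hyS := hmem (t + 1)
    have hxy := hpair t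
    have hxlt : astar t < xhat := by linarith [hyS.1]
    refine le_of_tendsto_of_tendsto ((htminus _ hyS hy).const_mul β)
      (htplus _ hxS hxlt) ?_
    filter_upwards [Ioc_mem_nhdsGT_of_mem (⟨le_refl (0 : ℝ), hy⟩ :
      (0 : ℝ) ∈ Set.Ico (0 : ℝ) (astar (t + 1)))] with ε hε
    have hcS : astar t + ε ∈ Set.Icc (0 : ℝ) xhat :=
      ⟨by linarith [hxS.1, hε.1.le], by linarith [hε.2]⟩
    have hdS : astar (t + 1) - ε ∈ Set.Icc (0 : ℝ) xhat :=
      ⟨by linarith [hε.2], by linarith [hyS.2, hε.1.le]⟩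
    have hA1 := hkey t (astar t + ε) (astar (t + 1) - ε) hcS hdS (by ring)
    rw [pow_succ] at hA1
    have hB2 : ℓ (astar t + ε) - ℓ (astar t) ≤ ε * ℓd (astar t + ε) := by
      have h := (hgrad (astar t) hxS (astar t + ε) hcS (by linarith [hε.1])).2
      rwa [add_sub_cancel_left] at h
    have hC2 : ε * ℓd (astar (t + 1) - ε) ≤ ℓ (astar (t + 1)) - ℓ (astar (t + 1) - ε) := by
      have h := (hgrad (astar (t + 1) - ε) hdS (astar (t + 1)) hyS (by linarith [hε.1])).1
      rwa [_root_.sub_sub_cancel] at h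
    have hbt : (0 : ℝ) < β ^ t := pow_pos hβ0 t
    have key2 : (ε * β ^ t) * (β * ℓd (astar (t + 1) - ε)) ≤ (ε * β ^ t) * ℓd (astar t + ε) := by
      nlinarith [mul_le_mul_of_nonneg_left hB2 hbt.le,
        mul_le_mul_of_nonneg_left hC2 (mul_pos hbt hβ0).le]
    exact le_of_mul_le_mul_left key2 (mul_pos hε.1 hbt)
  -- Euler inequality B : shifting mass from t to t+1
  have hB : ∀ t, 0 < astar t → ℓd (astar t) ≤ β * ℓd (astar (t + 1)) := by
    intro t hx
    have hxS := hmem t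
    have hyS := hmem (t + 1)
    have hxy := hpair t
    have hylt : astar (t + 1) < xhat := by linarith [hxS.1]
    refine le_of_tendsto_of_tendsto (htminus _ hxS hx)
      ((htplus _ hyS hylt).const_mul β) ?_
    filter_upwards [Ioc_mem_nhdsGT_of_mem (⟨le_refl (0 : ℝ), hx⟩ :
      (0 : ℝ) ∈ Set.Ico (0 : ℝ) (astar t))] with ε hε
    have hcS : astar t - ε ∈ Set.Icc (0 : ℝ) xhat :=
      ⟨by linarith [hε.2], by linarith [hxS.2, hε.1.le]⟩
    have hdS : astar (t + 1) + ε ∈ Set.Icc (0 : ℝ) xhat :=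
      ⟨by linarith [hyS.1, hε.1.le], by linarith [hε.2]⟩
    have hA1 := hkey t (astar t - ε) (astar (t + 1) + ε) hcS hdS (by ring)
    rw [pow_succ] at hA1
    have hB2 : ε * ℓd (astar t - ε) ≤ ℓ (astar t) - ℓ (astar t - ε) := by
      have h := (hgrad (astar t - ε) hcS (astar t) hxS (by linarith [hε.1])).1
      rwa [_root_.sub_sub_cancel] at h
    have hC2 : ℓ (astar (t + 1) + ε) - ℓ (astar (t + 1)) ≤ ε * ℓd (astar (t + 1) + ε) := by
      have h := (hgrad (astar (t + 1)) hyS (astar (t + 1) + ε) hdS (by linarith [hε.1])).2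
      rwa [add_sub_cancel_left] at h
    have hbt : (0 : ℝ) < β ^ t := pow_pos hβ0 t
    have key2 : (ε * β ^ t) * ℓd (astar t - ε) ≤
        (ε * β ^ t) * (β * ℓd (astar (t + 1) + ε)) := by
      nlinarith [mul_le_mul_of_nonneg_left hB2 hbt.le,
        mul_le_mul_of_nonneg_left hC2 (mul_pos hbt hβ0).le]
    exact le_of_mul_le_mul_left key2 (mul_pos hε.1 hbt)
  -- combining
  have hxpos : ∀ t, 0 < astar (t + 1) → 0 < astar t := by
    intro t hy
    by_contra h
    push_neg at h
    have hx0 : astar t = 0 := le_antisymm h (hnn t)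
    have h1 := hA t hy
    rw [hx0] at h1
    have h2 : ℓd 0 < ℓd (astar (t + 1)) := hmono h0S (hmem (t + 1)) hy
    have h3 : 0 < ℓd (astar (t + 1)) := hpos _ (hmem (t + 1))
    nlinarith
  have heq : ∀ t, 0 < astar (t + 1) → ℓd (astar (t + 1)) = β⁻¹ * ℓd (astar t) := by
    intro t hy
    have h1 := hA t hy
    have h2 := hB t (hxpos t hy)
    have h3 : β * ℓd (astar (t + 1)) = ℓd (astar t) := le_antisymm h1 h2
    rw [← h3, ← mul_assoc, inv_mul_cancel₀ (ne_of_gt hβ0), one_mul]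
  constructor
  · intro t
    rcases (hnn (t + 1)).lt_or_eq with hy | hy
    · rw [heq t hy]
      refine (max_eq_left ?_).symm
      rw [← heq t hy]
      exact (hmono h0S (hmem (t + 1)) hy).le
    · rw [← hy]
      refine (max_eq_right ?_).symm
      rcases (hnn t).lt_or_eq with hx | hx
      · have h2 := hB t hx
        rw [← hy] at h2
        calc β⁻¹ * ℓd (astar t) ≤ β⁻¹ * (β * ℓd 0) :=
              mul_le_mul_of_nonneg_left h2 (inv_nonneg.mpr hβ0.le)
          _ = ℓd 0 := by rw [← mul_assoc, inv_mul_cancel₀ (ne_of_gt hβ0), one_mul]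
      · rw [← hx]
        have hp0 := hpos 0 h0S
        have hinv : β⁻¹ < 1 := inv_lt_one_of_one_lt₀ hβ
        nlinarith
  · apply antitone_nat_of_succ_le
    intro t
    rcases (hnn (t + 1)).lt_or_eq with hy | hy
    · have h1 := hA t hy
      have h3 : 0 < ℓd (astar (t + 1)) := hpos _ (hmem (t + 1))
      have hlt : ℓd (astar (t + 1)) < ℓd (astar t) := by nlinarith
      exact ((hmono.lt_iff_lt (hmem (t + 1)) (hmem t)).mp hlt).le
    · rw [← hy]
      exact hnn t
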